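/- Let T be a Galton–Watson tree with offspring distribution ξ satisfying P(survival) = p > 0, and fix integers k ≥ 1 and ω ≥ 2 with ω²/(k+1) ≥ ω·log²n for a parameter n. Then P(∑_{j=0}^k Z_j ≥ ω² and Z_k < ω) ≤ P(Bin(⌈ω²/(k+1)⌉, p) < ω), where Z_j = |T_j| is the size of generation j. -/

import Mathlib

/-- Distribution of the sum of `a` iid copies of the offspring distribution `ξ`. -/
noncomputable def sumIid (ξ : PMF ℕ) : ℕ → PMF ℕ
  | 0 => PMF.pure 0
  | a + 1 => (sumIid ξ a).bind (fun y => ξ.map (fun x => x + y))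

/-- `m` steps of the Galton–Watson generation-size chain started from `a`. -/
noncomputable def gwIter (ξ : PMF ℕ) : ℕ → ℕ → PMF ℕ
  | 0 => fun a => PMF.pure a
  | m + 1 => fun a => (sumIid ξ a).bind (gwIter ξ m)

/-- The distribution of `Z_k`, generation `k` of a Galton–Watson process with
offspring distribution `ξ` started from one individual. -/
noncomputable def gwGen (ξ : PMF ℕ) (k : ℕ) : PMF ℕ := gwIter ξ k 1

/-- The joint law of the trajectory `(Z_k, Z_{k-1}, …, Z_0)` (most recent
generation first), as a PMF on lists of length `k+1`, with `Z_0 = 1`. -/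
noncomputable def gwTraj (ξ : PMF ℕ) : ℕ → PMF (List ℕ)
  | 0 => PMF.pure [1]
  | k + 1 => (gwTraj ξ k).bind (fun l => (sumIid ξ l.headI).map (fun z => z :: l))

/-- `binomPr N k p` is the probability that a `Bin(N,p)` random variable equals `k`. -/
noncomputable def binomPr (N k : ℕ) (p : ℝ) : ℝ :=
  (N.choose k : ℝ) * p ^ k * (1 - p) ^ (N - k)


open scoped ENNReal

namespace GWAux

/-- truncated CDF: `P(X < t)` -/
noncomputable def cdf (μ : PMF ℕ) (t : ℕ) : ℝ≥0∞ := ∑' z, if z < t then μ z else 0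

/-- convolution -/
noncomputable def conv (μ ν : PMF ℕ) : PMF ℕ := μ.bind (fun y => ν.map (fun x => x + y))

lemma sumIid_succ (ξ : PMF ℕ) (a : ℕ) : sumIid ξ (a+1) = conv (sumIid ξ a) ξ := rfl

lemma cdf_le_one (μ : PMF ℕ) (t : ℕ) : cdf μ t ≤ 1 := by
  rw [← PMF.tsum_coe μ]
  exact ENNReal.tsum_le_tsum fun z => by split_ifs <;> simp

lemma cdf_mono (μ : PMF ℕ) {s t : ℕ} (h : s ≤ t) : cdf μ s ≤ cdf μ t := by
  refine ENNReal.tsum_le_tsum fun z => ?_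
  split_ifs with h1 h2 h2
  · exact le_rfl
  · exact absurd (h1.trans_le h) h2
  · exact zero_le
  · exact le_rfl

lemma cdf_zero (μ : PMF ℕ) : cdf μ 0 = 0 := by simp [cdf]

lemma cdf_one (μ : PMF ℕ) : cdf μ 1 = μ 0 := by
  rw [cdf, tsum_eq_single 0 (fun z hz => by simp [Nat.lt_one_iff, hz])]
  simp

lemma cdf_map_add (ν : PMF ℕ) (y t : ℕ) : cdf (ν.map (fun x => x + y)) t = cdf ν (t - y) := by
  rw [cdf, cdf]
  have : ∀ z, (if z < t then (ν.map (fun x => x + y)) z else 0)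
      = ∑' x, if z = x + y then (if z < t then ν x else 0) else 0 := by
    intro z
    split_ifs with h
    · rw [PMF.map_apply]
      exact tsum_congr fun x => by simp [h]
    · simp [h]
  rw [tsum_congr this, ENNReal.tsum_comm]
  refine tsum_congr fun x => ?_
  rw [tsum_eq_single (x + y) (fun z hz => if_neg hz), if_pos rfl]
  simp only [lt_tsub_iff_right]

lemma cdf_conv (μ ν : PMF ℕ) (t : ℕ) :
    cdf (conv μ ν) t = ∑' y, μ y * cdf ν (t - y) := by
  rw [cdf]
  have : ∀ z, (if z < t then (conv μ ν) z else 0)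
      = ∑' y, μ y * (if z < t then (ν.map (fun x => x + y)) z else 0) := by
    intro z
    split_ifs with h
    · rw [conv, PMF.bind_apply]
    · simp [h]
  rw [tsum_congr this, ENNReal.tsum_comm]
  exact tsum_congr fun y => by rw [ENNReal.tsum_mul_left, ← cdf, cdf_map_add]

lemma conv_comm (μ ν : PMF ℕ) : conv μ ν = conv ν μ := by
  rw [conv, conv]
  show μ.bind (fun y => ν.bind fun x => PMF.pure (x + y)) =
    ν.bind (fun y => μ.bind fun x => PMF.pure (x + y))
  rw [PMF.bind_comm]
  simp [add_comm]

lemma cdf_conv_mono {μ ν μ' ν' : PMF ℕ} (h1 : ∀ t, cdf μ t ≤ cdf μ' t)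
    (h2 : ∀ t, cdf ν t ≤ cdf ν' t) (t : ℕ) : cdf (conv μ ν) t ≤ cdf (conv μ' ν') t := by
  calc cdf (conv μ ν) t ≤ cdf (conv μ ν') t := by
        rw [cdf_conv, cdf_conv]
        exact ENNReal.tsum_le_tsum fun y => mul_le_mul_right (h2 _) _
    _ = cdf (conv ν' μ) t := by rw [conv_comm]
    _ ≤ cdf (conv ν' μ') t := by
        rw [cdf_conv, cdf_conv]
        exact ENNReal.tsum_le_tsum fun y => mul_le_mul_right (h1 _) _
    _ = cdf (conv μ' ν') t := by rw [conv_comm]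

lemma cdf_sumIid_mono {μ ν : PMF ℕ} (h : ∀ t, cdf μ t ≤ cdf ν t) (a t : ℕ) :
    cdf (sumIid μ a) t ≤ cdf (sumIid ν a) t := by
  induction a generalizing t with
  | zero => exact le_rfl
  | succ a ih => exact cdf_conv_mono ih h t

lemma conv_pure_zero (μ : PMF ℕ) : conv μ (PMF.pure 0) = μ := by
  rw [conv]
  have : ∀ y : ℕ, (PMF.pure 0 : PMF ℕ).map (fun x => x + y) = PMF.pure y := by
    intro y; rw [PMF.pure_map]; simp
  simp_rw [this]
  exact PMF.bind_pure μ

lemma conv_assoc (μ ν ρ : PMF ℕ) : conv (conv μ ν) ρ = conv μ (conv ν ρ) := by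
  rw [conv, conv, conv, conv, PMF.bind_bind]
  refine congrArg _ (funext fun y => ?_)
  rw [PMF.bind_map, PMF.map_bind]
  refine congrArg _ (funext fun x => ?_)
  show ρ.map (fun w => w + (x + y)) = (ρ.map fun w => w + x).map fun v => v + y
  rw [PMF.map_comp]
  congr 1
  funext w
  simp [Function.comp, add_assoc]

lemma sumIid_add (ξ : PMF ℕ) (a b : ℕ) :
    sumIid ξ (a + b) = conv (sumIid ξ a) (sumIid ξ b) := by
  induction b with
  | zero => exact (conv_pure_zero _).symm
  | succ b ih => rw [← Nat.add_assoc, sumIid_succ, sumIid_succ, ih, conv_assoc]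

lemma cdf_sumIid_anti (ν : PMF ℕ) {N a : ℕ} (h : N ≤ a) (t : ℕ) :
    cdf (sumIid ν a) t ≤ cdf (sumIid ν N) t := by
  obtain ⟨d, rfl⟩ := Nat.exists_eq_add_of_le h
  rw [sumIid_add, conv_comm, cdf_conv]
  calc ∑' y, (sumIid ν d) y * cdf (sumIid ν N) (t - y)
      ≤ ∑' y, (sumIid ν d) y * cdf (sumIid ν N) t :=
        ENNReal.tsum_le_tsum fun y => mul_le_mul_right (cdf_mono _ (Nat.sub_le _ _)) _
    _ = cdf (sumIid ν N) t := by rw [ENNReal.tsum_mul_right, PMF.tsum_coe, one_mul]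


/-- Bernoulli distribution on ℕ -/
noncomputable def bern (q : ℝ≥0∞) (hq : q ≤ 1) : PMF ℕ :=
  PMF.ofFinset (fun n => if n = 0 then 1 - q else if n = 1 then q else 0) {0, 1}
    (by simp [tsub_add_cancel_of_le hq])
    (by intro a ha; simp only [Finset.mem_insert, Finset.mem_singleton, not_or] at ha
        simp [ha.1, ha.2])

lemma bern_apply (q : ℝ≥0∞) (hq : q ≤ 1) (n : ℕ) :
    bern q hq n = if n = 0 then 1 - q else if n = 1 then q else 0 := by
  rw [bern, PMF.ofFinset_apply]

lemma cdf_bern (q : ℝ≥0∞) (hq : q ≤ 1) (t : ℕ) :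
    cdf (bern q hq) t = if t = 0 then 0 else if t = 1 then 1 - q else 1 := by
  rcases t with _ | _ | t
  · simp [cdf_zero]
  · simp [cdf_one, bern_apply]
  · rw [if_neg (by omega), if_neg (by omega), cdf]
    rw [tsum_eq_sum (s := {0, 1}) (by
      intro z hz
      simp only [Finset.mem_insert, Finset.mem_singleton, not_or] at hz
      split_ifs with h
      · rw [bern_apply]; simp [hz.1, hz.2]
      · rfl)]
    rw [Finset.sum_pair (by norm_num)]
    rw [if_pos (by omega), if_pos (by omega), bern_apply, bern_apply]
    simp [tsub_add_cancel_of_le hq]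

lemma cdf_le_cdf_bern {μ : PMF ℕ} {q : ℝ≥0∞} (hq : q ≤ 1) (hμ : μ 0 ≤ 1 - q) (t : ℕ) :
    cdf μ t ≤ cdf (bern q hq) t := by
  rw [cdf_bern]
  rcases t with _ | _ | t
  · simp [cdf_zero]
  · simpa [cdf_one] using hμ
  · rw [if_neg (by omega), if_neg (by omega)]
    exact cdf_le_one μ _

lemma binomPr_nonneg {p : ℝ} (hp0 : 0 ≤ p) (hp1 : p ≤ 1) (N z : ℕ) : 0 ≤ binomPr N z p :=
  mul_nonneg (mul_nonneg (Nat.cast_nonneg _) (pow_nonneg hp0 _)) (pow_nonneg (by linarith) _)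

lemma binomPr_zero_succ (N : ℕ) (p : ℝ) : binomPr (N+1) 0 p = binomPr N 0 p * (1 - p) := by
  simp [binomPr, pow_succ]

lemma binomPr_succ (N w : ℕ) (p : ℝ) :
    binomPr (N+1) (w+1) p = binomPr N (w+1) p * (1-p) + binomPr N w p * p := by
  unfold binomPr
  rcases lt_trichotomy w N with h | rfl | h
  · have e1 : N + 1 - (w + 1) = N - w := by omega
    have e2 : N - w = (N - (w + 1)) + 1 := by omega
    rw [e1, Nat.choose_succ_succ', e2, pow_succ]
    push_cast
    ring
  · rw [Nat.choose_succ_self, Nat.choose_self, Nat.choose_self]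
    simp [pow_succ]
  · rw [Nat.choose_eq_zero_of_lt (by omega), Nat.choose_eq_zero_of_lt (by omega),
      Nat.choose_eq_zero_of_lt (by omega)]
    simp

lemma bern_sumIid_apply {p : ℝ} (hp0 : 0 ≤ p) (hp1 : p ≤ 1)
    (hq : ENNReal.ofReal p ≤ 1) (N z : ℕ) :
    sumIid (bern (ENNReal.ofReal p) hq) N z = ENNReal.ofReal (binomPr N z p) := by
  have h1q : (1 : ℝ≥0∞) - ENNReal.ofReal p = ENNReal.ofReal (1 - p) := by
    rw [ENNReal.ofReal_sub _ hp0, ENNReal.ofReal_one]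
  induction N generalizing z with
  | zero =>
    show (PMF.pure 0) z = _
    rw [PMF.pure_apply]
    rcases z with _ | z
    · simp [binomPr]
    · rw [if_neg (by omega)]
      simp [binomPr]
  | succ N ih =>
    show ((sumIid _ N).bind fun y => (bern _ hq).map fun x => x + y) z = _
    rw [PMF.bind_apply]
    have hmap : ∀ y, ((bern (ENNReal.ofReal p) hq).map fun x => x + y) z
        = (if z = y then 1 - ENNReal.ofReal p else 0)
          + (if z = 1 + y then ENNReal.ofReal p else 0) := by
      intro y
      rw [PMF.map_apply]
      rw [tsum_eq_sum (s := ({0, 1} : Finset ℕ)) ?h0]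
      case h0 =>
        intro x hx
        simp only [Finset.mem_insert, Finset.mem_singleton, not_or] at hx
        rw [bern_apply]
        simp [hx.1, hx.2]
      rw [Finset.sum_pair (by norm_num)]
      rw [bern_apply, bern_apply]
      norm_num
    simp_rw [hmap, mul_add]
    rw [ENNReal.tsum_add]
    rcases z with _ | w
    · rw [tsum_eq_single 0 (fun y hy => by rw [if_neg (fun h => hy h.symm), mul_zero])]
      rw [if_pos rfl, ih]
      rw [ENNReal.tsum_eq_zero.mpr fun y => by rw [if_neg (by omega), mul_zero], add_zero]
      rw [h1q, ← ENNReal.ofReal_mul (binomPr_nonneg hp0 hp1 N 0), binomPr_zero_succ]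
    · rw [tsum_eq_single (w+1) (fun y hy => by rw [if_neg (fun h => hy h.symm), mul_zero])]
      rw [if_pos rfl, ih]
      rw [tsum_eq_single w (fun y hy => by rw [if_neg (by omega), mul_zero])]
      rw [if_pos (by omega), ih]
      rw [h1q, ← ENNReal.ofReal_mul (binomPr_nonneg hp0 hp1 N (w+1)),
        ← ENNReal.ofReal_mul (binomPr_nonneg hp0 hp1 N w),
        ← ENNReal.ofReal_add (mul_nonneg (binomPr_nonneg hp0 hp1 N (w+1)) (by linarith))
          (mul_nonneg (binomPr_nonneg hp0 hp1 N w) hp0),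
        ← binomPr_succ]

lemma cdf_sumIid_bern_eq {p : ℝ} (hp0 : 0 ≤ p) (hp1 : p ≤ 1)
    (hq : ENNReal.ofReal p ≤ 1) (N t : ℕ) :
    cdf (sumIid (bern (ENNReal.ofReal p) hq) N) t
      = ENNReal.ofReal (∑ m ∈ Finset.range t, binomPr N m p) := by
  rw [cdf, tsum_eq_sum (s := Finset.range t) (by
    intro z hz
    rw [if_neg (by simpa using hz)])]
  rw [ENNReal.ofReal_sum_of_nonneg (fun m _ => binomPr_nonneg hp0 hp1 N m)]
  refine Finset.sum_congr rfl fun z hz => ?_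
  rw [if_pos (by simpa using hz), bern_sumIid_apply hp0 hp1]


lemma gwIter_zero_start (ξ : PMF ℕ) (m : ℕ) : gwIter ξ m 0 = PMF.pure 0 := by
  induction m with
  | zero => rfl
  | succ m ih =>
    show (sumIid ξ 0).bind (gwIter ξ m) = _
    show (PMF.pure 0).bind (gwIter ξ m) = _
    rw [PMF.pure_bind, ih]

lemma gwIter_succ' (ξ : PMF ℕ) (m a : ℕ) :
    gwIter ξ (m+1) a = (gwIter ξ m a).bind (sumIid ξ) := by
  induction m generalizing a with
  | zero =>
    show (sumIid ξ a).bind (fun b => PMF.pure b) = (PMF.pure a).bind (sumIid ξ)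
    rw [PMF.pure_bind]
    exact PMF.bind_pure _
  | succ m ih =>
    show (sumIid ξ a).bind (gwIter ξ (m+1)) = ((sumIid ξ a).bind (gwIter ξ m)).bind (sumIid ξ)
    rw [PMF.bind_bind]
    exact congrArg _ (funext fun b => ih b)

lemma bind_conv (μ ν : PMF ℕ) (f : ℕ → PMF ℕ) :
    (conv μ ν).bind f = μ.bind fun y => ν.bind fun x => f (x + y) := by
  rw [conv, PMF.bind_bind]
  exact congrArg _ (funext fun y => PMF.bind_map _ _ _)

lemma gwIter_add_count (ξ : PMF ℕ) (m a b : ℕ) :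
    gwIter ξ m (a + b) = conv (gwIter ξ m a) (gwIter ξ m b) := by
  induction m generalizing a b with
  | zero =>
    show PMF.pure (a+b) = (PMF.pure a).bind fun y => (PMF.pure b).map (fun x => x + y)
    rw [PMF.pure_bind, PMF.pure_map, add_comm]
  | succ m ih =>
    show (sumIid ξ (a+b)).bind (gwIter ξ m) = conv ((sumIid ξ a).bind (gwIter ξ m)) ((sumIid ξ b).bind (gwIter ξ m))
    rw [sumIid_add, bind_conv]
    rw [conv, PMF.bind_bind]
    refine congrArg _ (funext fun y => ?_)
    simp only [PMF.map_bind]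
    rw [PMF.bind_comm]
    refine congrArg _ (funext fun x => ?_)
    rw [ih, conv_comm]
    rfl

lemma gwIter_eq_sumIid (ξ : PMF ℕ) (m a : ℕ) :
    gwIter ξ m a = sumIid (gwGen ξ m) a := by
  induction a with
  | zero => exact gwIter_zero_start ξ m
  | succ a ih =>
    rw [gwIter_add_count, ih, sumIid_succ, gwGen]


/-- one-step extension of a trajectory -/
noncomputable def step (ξ : PMF ℕ) (l : List ℕ) : PMF (List ℕ) :=
  (sumIid ξ l.headI).map (fun z => z :: l)

noncomputable def ext (ξ : PMF ℕ) : ℕ → List ℕ → PMF (List ℕ)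
  | 0, l => PMF.pure l
  | m + 1, l => (ext ξ m l).bind (step ξ)

lemma gwTraj_eq (ξ : PMF ℕ) (j m : ℕ) :
    gwTraj ξ (j + m) = (gwTraj ξ j).bind (ext ξ m) := by
  induction m with
  | zero => exact (PMF.bind_pure _).symm
  | succ m ih =>
    show (gwTraj ξ (j+m)).bind (step ξ) = _
    rw [ih, PMF.bind_bind]
    rfl

lemma ext_support_drop (ξ : PMF ℕ) (m : ℕ) (l : List ℕ) :
    ∀ l' ∈ (ext ξ m l).support, l'.drop m = l := by
  induction m with
  | zero => intro l' hl'; rw [ext, PMF.support_pure] at hl'; simpa using hl'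
  | succ m ih =>
    intro l' hl'
    rw [ext, PMF.support_bind] at hl'
    simp only [Set.mem_iUnion] at hl'
    obtain ⟨l₀, hl₀, hmem⟩ := hl'
    rw [step, PMF.support_map] at hmem
    obtain ⟨z, _, rfl⟩ := hmem
    rw [List.drop_succ_cons]
    exact ih l₀ hl₀

lemma ext_map_headI (ξ : PMF ℕ) (m : ℕ) (l : List ℕ) :
    (ext ξ m l).map List.headI = gwIter ξ m l.headI := by
  induction m with
  | zero => rw [ext, PMF.pure_map]; rfl
  | succ m ih =>
    rw [ext, PMF.map_bind]
    have hstep : ∀ l₀ : List ℕ, (step ξ l₀).map List.headI = sumIid ξ l₀.headI := by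
      intro l₀
      rw [step, PMF.map_comp]
      exact PMF.map_id _
    simp_rw [hstep]
    rw [gwIter_succ', ← ih, PMF.bind_map]
    rfl

lemma gwTraj_support_length (ξ : PMF ℕ) (k : ℕ) :
    ∀ l ∈ (gwTraj ξ k).support, l.length = k + 1 := by
  induction k with
  | zero =>
    intro l hl
    rw [gwTraj, PMF.support_pure] at hl
    simp only [Set.mem_singleton_iff] at hl
    subst hl
    rfl
  | succ k ih =>
    intro l hl
    rw [gwTraj, PMF.support_bind] at hl
    simp only [Set.mem_iUnion] at hl
    obtain ⟨l₀, hl₀, hmem⟩ := hl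
    rw [PMF.support_map] at hmem
    obtain ⟨z, _, rfl⟩ := hmem
    simp [ih l₀ hl₀]

/-- integral under a map, for ℝ≥0∞-valued weights -/
lemma tsum_map_mul {α β : Type*} (ρ : PMF α) (f : α → β) (h : β → ℝ≥0∞) :
    ∑' z, (ρ.map f) z * h z = ∑' a, ρ a * h (f a) := by
  classical
  have : ∀ z, (ρ.map f) z * h z = ∑' a, (if z = f a then ρ a * h z else 0) := by
    intro z
    rw [PMF.map_apply, ← ENNReal.tsum_mul_right]
    exact tsum_congr fun a => by split_ifs <;> simp
  rw [tsum_congr this, ENNReal.tsum_comm]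
  refine tsum_congr fun a => ?_
  rw [tsum_eq_single (f a) (fun z hz => if_neg hz), if_pos rfl]

/-- Key Markov computation. -/
lemma key (ξ : PMF ℕ) (μ : PMF (List ℕ)) (m : ℕ) (P : List ℕ → Prop) [DecidablePred P]
    (h : ℕ → ℝ≥0∞) :
    ∑' l, (μ.bind (ext ξ m)) l * ((if P (l.drop m) then 1 else 0) * h l.headI)
      = ∑' l', μ l' * ((if P l' then 1 else 0) * ∑' z, gwIter ξ m l'.headI z * h z) := by
  have expand : ∀ l, (μ.bind (ext ξ m)) l * ((if P (l.drop m) then 1 else 0) * h l.headI)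
      = ∑' l', μ l' * (ext ξ m l' l * ((if P (l.drop m) then 1 else 0) * h l.headI)) := by
    intro l
    rw [PMF.bind_apply, ← ENNReal.tsum_mul_right]
    exact tsum_congr fun l' => by ring
  rw [tsum_congr expand, ENNReal.tsum_comm]
  refine tsum_congr fun l' => ?_
  rw [ENNReal.tsum_mul_left]
  congr 1
  have hsupp : ∀ l, ext ξ m l' l ≠ 0 → l.drop m = l' := fun l h0 =>
    ext_support_drop ξ m l' l (not_not.mp fun hn => h0 ((PMF.apply_eq_zero_iff _ _).2 hn))
  have point : ∀ l, ext ξ m l' l * ((if P (l.drop m) then 1 else 0) * h l.headI)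
      = (if P l' then 1 else 0) * (ext ξ m l' l * h l.headI) := by
    intro l
    rcases eq_or_ne (ext ξ m l' l) 0 with h0 | h0
    · rw [h0]
      simp
    · rw [hsupp l h0]
      ring
  rw [tsum_congr point, ENNReal.tsum_mul_left]
  congr 1
  rw [← ext_map_headI ξ m l']
  exact (tsum_map_mul _ _ _).symm


lemma headI_mem {l : List ℕ} (h : l ≠ []) : l.headI ∈ l := by
  rcases l with _ | ⟨a, t⟩
  · exact absurd rfl h
  · exact List.mem_cons_self

lemma exists_first (N : ℕ) (l : List ℕ) (h : ∃ x ∈ l, N ≤ x) :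
    ∃ m, m < l.length ∧ N ≤ (l.drop m).headI ∧ ∀ x ∈ (l.drop m).tail, x < N := by
  induction l with
  | nil => obtain ⟨x, hx, _⟩ := h; cases hx
  | cons a t ih =>
    by_cases ht : ∃ x ∈ t, N ≤ x
    · obtain ⟨m, hm, h1, h2⟩ := ih ht
      refine ⟨m + 1, by simpa using Nat.succ_lt_succ hm, ?_, ?_⟩
      · simpa [List.drop_succ_cons] using h1
      · simpa [List.drop_succ_cons] using h2
    · push_neg at ht
      obtain ⟨x, hx, hNx⟩ := h
      have ha : N ≤ a := by
        rcases List.mem_cons.mp hx with rfl | hxt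
        · exact hNx
        · exact absurd hNx (not_le.mpr (ht x hxt))
      exact ⟨0, by simp, by simpa using ha, fun x hx' => ht x (by simpa using hx')⟩

lemma pigeon {N k ω : ℕ} (hN : (k + 1) * N ≤ ω ^ 2 + k) (hω : 1 ≤ ω) (l : List ℕ)
    (hlen : l.length = k + 1) (hsum : ω ^ 2 ≤ l.sum) : ∃ x ∈ l, N ≤ x := by
  by_contra hcon
  push_neg at hcon
  have hb : l.sum ≤ l.length • (N - 1) :=
    List.sum_le_card_nsmul l (N - 1) fun x hx => by have := hcon x hx; omega
  rw [hlen, smul_eq_mul] at hb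
  have hω2 : 1 ≤ ω ^ 2 := Nat.one_le_pow _ _ hω
  rcases N with _ | M
  · rcases l with _ | ⟨a, t⟩
    · simp at hlen
    · exact absurd (hcon a (List.mem_cons_self)) (by omega)
  · have e : (k + 1) * (M + 1) = (k + 1) * M + (k + 1) := by ring
    rw [e] at hN
    have e2 : M + 1 - 1 = M := rfl
    rw [e2] at hb
    generalize hA : (k + 1) * M = A at hN hb
    generalize hW : ω ^ 2 = W at hN hsum hω2
    omega

lemma disj {k N : ℕ} (l : List ℕ) (hlen : l.length = k + 1) {j j' : ℕ}
    (hj : j ≤ k) (hj' : j' ≤ k)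
    (h1 : N ≤ (l.drop (k - j)).headI ∧ ∀ x ∈ (l.drop (k - j)).tail, x < N)
    (h2 : N ≤ (l.drop (k - j')).headI ∧ ∀ x ∈ (l.drop (k - j')).tail, x < N) : j = j' := by
  by_contra hne
  wlog hlt : j < j' generalizing j j'
  · exact this hj' hj h2 h1 (Ne.symm hne) (by omega)
  have hii : (k - j') + 1 ≤ k - j := by omega
  have hne2 : l.drop (k - j) ≠ [] := by
    rw [← List.length_pos_iff_ne_nil, List.length_drop]
    omega
  have hmem : (l.drop (k - j)).headI ∈ l.drop (k - j) := headI_mem hne2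
  have hsub : l.drop (k - j) ⊆ l.drop ((k - j') + 1) := by
    have e : l.drop (k - j) = (l.drop ((k - j') + 1)).drop ((k - j) - ((k - j') + 1)) := by
      rw [List.drop_drop]
      congr 1
      omega
    rw [e]
    exact List.drop_subset _ _
  have hmem2 : (l.drop (k - j)).headI ∈ (l.drop (k - j')).tail := by
    rw [List.tail_drop]
    exact hsub hmem
  exact absurd (h2.2 _ hmem2) (not_lt.mpr h1.1)


end GWAux

/-- Let `T` be a Galton–Watson tree with survival probability `p > 0`, and fix
`k ≥ 1`, `ω ≥ 2` with `ω²/(k+1) ≥ ω log² n` for a parameter `n`.  Then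
`P(∑_{j=0}^k Z_j ≥ ω² and Z_k < ω) ≤ P(Bin(⌈ω²/(k+1)⌉, p) < ω)`. -/
theorem gw_total_vs_last (ξ : PMF ℕ) (p : ℝ)
    (hp : p = 1 - (⨆ m : ℕ, gwGen ξ m 0).toReal) (hppos : 0 < p)
    (k ω n : ℕ) (hk : 1 ≤ k) (hω : 2 ≤ ω)
    (hn : (ω : ℝ) * Real.log n ^ 2 ≤ (ω : ℝ) ^ 2 / ((k : ℝ) + 1)) :
    (∑' l : List ℕ, if ω ^ 2 ≤ l.sum ∧ l.headI < ω then gwTraj ξ k l else 0).toReal ≤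
      ∑ m ∈ Finset.range ω, binomPr ((ω ^ 2 + k) / (k + 1)) m p := by
  classical
  open GWAux in
  set N : ℕ := (ω ^ 2 + k) / (k + 1) with hN
  -- basic facts about p and the extinction supremum
  set s : ℝ≥0∞ := ⨆ m : ℕ, gwGen ξ m 0 with hs
  have hs_le_one : s ≤ 1 := iSup_le fun m => PMF.coe_le_one _ _
  have hs_ne_top : s ≠ ⊤ := (hs_le_one.trans_lt ENNReal.one_lt_top).ne
  have hp0 : 0 ≤ p := hppos.le
  have hp1 : p ≤ 1 := by
    rw [hp]
    have := ENNReal.toReal_nonneg (a := s)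
    linarith
  have hq : ENNReal.ofReal p ≤ 1 := ENNReal.ofReal_le_one.mpr hp1
  have hq_eq : 1 - ENNReal.ofReal p = s := by
    rw [hp, ENNReal.ofReal_sub _ ENNReal.toReal_nonneg, ENNReal.ofReal_one,
      ENNReal.ofReal_toReal hs_ne_top, ENNReal.sub_sub_cancel ENNReal.one_ne_top hs_le_one]
  have hbound : ∀ m : ℕ, gwGen ξ m 0 ≤ 1 - ENNReal.ofReal p := fun m => by
    rw [hq_eq]
    exact le_iSup (fun m => gwGen ξ m 0) m
  set B : ℝ≥0∞ := cdf (sumIid (bern (ENNReal.ofReal p) hq) N) ω with hB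
  have hStep1 : ∀ m a : ℕ, N ≤ a → cdf (gwIter ξ m a) ω ≤ B := by
    intro m a ha
    rw [gwIter_eq_sumIid]
    calc cdf (sumIid (gwGen ξ m) a) ω
        ≤ cdf (sumIid (bern (ENNReal.ofReal p) hq) a) ω :=
          cdf_sumIid_mono (fun t => cdf_le_cdf_bern hq (hbound m) t) a ω
      _ ≤ B := cdf_sumIid_anti _ ha ω
  have hN_mul : (k + 1) * N ≤ ω ^ 2 + k := by
    rw [mul_comm]
    exact Nat.div_mul_le_self _ _
  -- the first-hitting-generation events
  set C : List ℕ → Prop := fun l' => N ≤ l'.headI ∧ ∀ x ∈ l'.tail, x < N with hC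
  set h : ℕ → ℝ≥0∞ := fun z => if z < ω then 1 else 0 with hh
  have hcdf_inner : ∀ (μ : PMF ℕ), ∑' z, μ z * h z = cdf μ ω := by
    intro μ
    rw [show cdf μ ω = ∑' z, if z < ω then μ z else 0 from rfl]
    exact tsum_congr fun z => by rw [hh]; split_ifs with hz <;> simp [hz]
  have hdecomp : ∀ j : ℕ, j ≤ k → gwTraj ξ k = (gwTraj ξ j).bind (ext ξ (k - j)) := by
    intro j hj
    conv_lhs => rw [show k = j + (k - j) by omega]
    exact gwTraj_eq ξ j (k - j)
  -- pointwise indicator bound via pigeonhole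
  have hpt : ∀ l : List ℕ, (if ω ^ 2 ≤ l.sum ∧ l.headI < ω then gwTraj ξ k l else 0)
      ≤ ∑ j ∈ Finset.range (k + 1),
          gwTraj ξ k l * ((if C (l.drop (k - j)) then 1 else 0) * h l.headI) := by
    intro l
    split_ifs with hE
    · rcases eq_or_ne (gwTraj ξ k l) 0 with h0 | h0
      · rw [h0]
        exact zero_le
      · have hlen : l.length = k + 1 := gwTraj_support_length ξ k l
          (not_not.mp fun hn => h0 ((PMF.apply_eq_zero_iff _ _).2 hn))
        obtain ⟨x, hx, hNx⟩ := pigeon hN_mul (by omega) l hlen hE.1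
        obtain ⟨m, hm, h1, h2⟩ := exists_first N l ⟨x, hx, hNx⟩
        have hmk : m ≤ k := by omega
        have hkj : k - (k - m) = m := by omega
        have hjm : k - m ∈ Finset.range (k + 1) := by
          simp only [Finset.mem_range]
          omega
        refine le_trans (le_of_eq ?_) (Finset.single_le_sum (f := fun j =>
          gwTraj ξ k l * ((if C (l.drop (k - j)) then 1 else 0) * h l.headI))
          (fun i _ => zero_le) hjm)
        show gwTraj ξ k l
          = gwTraj ξ k l * ((if C (l.drop (k - (k - m))) then 1 else 0) * h l.headI)
        rw [hkj, if_pos (show C (l.drop m) from ⟨h1, h2⟩), hh]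
        simp [hE.2]
    · exact zero_le
  -- the double-counting bound : the first-hitting events at different generations are disjoint
  have hPsum : ∑ j ∈ Finset.range (k + 1),
      (∑' l' : List ℕ, gwTraj ξ j l' * (if C l' then 1 else 0)) ≤ 1 := by
    have hPeq : ∀ j ∈ Finset.range (k + 1),
        (∑' l' : List ℕ, gwTraj ξ j l' * (if C l' then 1 else 0))
          = ∑' l : List ℕ, gwTraj ξ k l * (if C (l.drop (k - j)) then 1 else 0) := by
      intro j hj
      have hjk : j ≤ k := Nat.lt_succ_iff.mp (Finset.mem_range.mp hj)
      have e1 := key ξ (gwTraj ξ j) (k - j) C (fun _ => 1)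
      simp only [mul_one, PMF.tsum_coe] at e1
      rw [hdecomp j hjk]
      exact e1.symm
    rw [Finset.sum_congr rfl hPeq, ← Summable.tsum_finsetSum (fun j _ => ENNReal.summable)]
    calc ∑' l : List ℕ, ∑ j ∈ Finset.range (k + 1),
          gwTraj ξ k l * (if C (l.drop (k - j)) then 1 else 0)
        ≤ ∑' l : List ℕ, gwTraj ξ k l := by
          refine ENNReal.tsum_le_tsum fun l => ?_
          rw [← Finset.mul_sum]
          rcases eq_or_ne (gwTraj ξ k l) 0 with h0 | h0
          · rw [h0, zero_mul]
          · have hlen : l.length = k + 1 := gwTraj_support_length ξ k l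
              (not_not.mp fun hn => h0 ((PMF.apply_eq_zero_iff _ _).2 hn))
            have hone : ∑ j ∈ Finset.range (k + 1),
                (if C (l.drop (k - j)) then (1 : ℝ≥0∞) else 0) ≤ 1 := by
              rw [Finset.sum_boole]
              rw [Nat.cast_le_one]
              refine Finset.card_le_one.mpr fun j hj j' hj' => ?_
              simp only [Finset.mem_filter, Finset.mem_range] at hj hj'
              exact disj l hlen (by omega) (by omega) hj.2 hj'.2
            calc gwTraj ξ k l * ∑ j ∈ Finset.range (k + 1),
                  (if C (l.drop (k - j)) then (1 : ℝ≥0∞) else 0)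
                ≤ gwTraj ξ k l * 1 := mul_le_mul_right hone _
              _ = gwTraj ξ k l := mul_one _
      _ = 1 := PMF.tsum_coe _
  -- main chain
  have main : (∑' l : List ℕ, if ω ^ 2 ≤ l.sum ∧ l.headI < ω then gwTraj ξ k l else 0) ≤ B := by
    calc (∑' l : List ℕ, if ω ^ 2 ≤ l.sum ∧ l.headI < ω then gwTraj ξ k l else 0)
        ≤ ∑' l : List ℕ, ∑ j ∈ Finset.range (k + 1),
            gwTraj ξ k l * ((if C (l.drop (k - j)) then 1 else 0) * h l.headI) :=
          ENNReal.tsum_le_tsum hpt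
      _ = ∑ j ∈ Finset.range (k + 1), ∑' l : List ℕ,
            gwTraj ξ k l * ((if C (l.drop (k - j)) then 1 else 0) * h l.headI) :=
          Summable.tsum_finsetSum (fun j _ => ENNReal.summable)
      _ ≤ ∑ j ∈ Finset.range (k + 1),
            B * (∑' l' : List ℕ, gwTraj ξ j l' * (if C l' then 1 else 0)) := by
          refine Finset.sum_le_sum fun j hj => ?_
          have hjk : j ≤ k := Nat.lt_succ_iff.mp (Finset.mem_range.mp hj)
          rw [hdecomp j hjk, key ξ (gwTraj ξ j) (k - j) C h]
          calc ∑' l' : List ℕ, gwTraj ξ j l' *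
                ((if C l' then 1 else 0) * ∑' z, gwIter ξ (k - j) l'.headI z * h z)
              ≤ ∑' l' : List ℕ, gwTraj ξ j l' * ((if C l' then 1 else 0) * B) := by
                refine ENNReal.tsum_le_tsum fun l' => mul_le_mul_right ?_ _
                split_ifs with hCl
                · rw [one_mul, one_mul, hcdf_inner]
                  exact hStep1 (k - j) l'.headI hCl.1
                · rw [zero_mul, zero_mul]
            _ = B * (∑' l' : List ℕ, gwTraj ξ j l' * (if C l' then 1 else 0)) := by
                have e2 : ∀ l' : List ℕ, gwTraj ξ j l' * ((if C l' then 1 else 0) * B)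
                    = (gwTraj ξ j l' * (if C l' then 1 else 0)) * B := fun l' => by ring
                rw [tsum_congr e2, ENNReal.tsum_mul_right, mul_comm]
      _ = B * ∑ j ∈ Finset.range (k + 1),
            (∑' l' : List ℕ, gwTraj ξ j l' * (if C l' then 1 else 0)) := by
          rw [Finset.mul_sum]
      _ ≤ B * 1 := mul_le_mul_right hPsum _
      _ = B := mul_one _
  have hRHS_nonneg : 0 ≤ ∑ m ∈ Finset.range ω, binomPr N m p :=
    Finset.sum_nonneg fun m _ => binomPr_nonneg hp0 hp1 _ _
  refine ENNReal.toReal_le_of_le_ofReal hRHS_nonneg ?_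
  rw [← cdf_sumIid_bern_eq hp0 hp1 hq N ω]
  exact main
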